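/- With ĝ_n(x) as above, if the bandwidths h_n satisfy φ_x(h_n) → 0 and n φ_x(h_n) → ∞ as n → ∞, then ĝ_n(x) converges to 1 in probability. -/

import Mathlib

open Filter Real Metric MeasureTheory ProbabilityTheory Finset

theorem stmt_10 {E : Type*} [PseudoMetricSpace E] [MeasurableSpace E] [BorelSpace E]
    {Ω : Type*} [MeasurableSpace Ω] (P : Measure Ω) [IsProbabilityMeasure P]
    (X : Ω → E) (hX : Measurable X)
    (Xs : ℕ → Ω → E) (hXs : ∀ i, Measurable (Xs i))
    (hindep : iIndepFun Xs P)
    (hident : ∀ i, IdentDistrib (Xs i) X P P)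
    (x : E) (K : ℝ → ℝ) (C₁ C₂ : ℝ) (hC₁ : 0 < C₁) (hC₁₂ : C₁ < C₂)
    (hKnonneg : ∀ t, 0 ≤ K t)
    (hKbound : ∀ t ∈ Set.Icc (0:ℝ) 1, C₁ ≤ K t ∧ K t ≤ C₂)
    (hKsupp : ∀ t, t ∉ Set.Icc (0:ℝ) 1 → K t = 0)
    (hKmeas : Measurable K)
    (h : ℕ → ℝ) (hhpos : ∀ n, 0 < h n)
    (φ : ℕ → ℝ) (hφ : ∀ n, φ n = (P {ω | dist x (X ω) ≤ h n}).toReal)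
    (hφpos : ∀ n, 0 < φ n)
    (μ₁ : ℕ → ℝ) (hμ₁ : ∀ n, μ₁ n = ∫ ω, K (dist x (X ω) / h n) ∂P)
    (g : ℕ → Ω → ℝ)
    (hg : ∀ n ω, g n ω = (1 / ((n : ℝ) * μ₁ n)) *
      ∑ i ∈ Finset.range n, K (dist x (Xs i ω) / h n))
    (hφ0 : Tendsto φ atTop (nhds 0))
    (hnφ : Tendsto (fun n : ℕ => (n : ℝ) * φ n) atTop atTop) :
    ∀ δ > (0:ℝ),
      Tendsto (fun n : ℕ => (P {ω | δ ≤ |g n ω - 1|}).toReal) atTop (nhds 0) := by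
  intro δ hδ
  have hC₂ : 0 < C₂ := hC₁.trans hC₁₂
  have hKle : ∀ t, K t ≤ C₂ := by
    intro t
    by_cases ht : t ∈ Set.Icc (0:ℝ) 1
    · exact (hKbound t ht).2
    · rw [hKsupp t ht]; exact hC₂.le
  -- measurability of e ↦ K(dist x e / h n)
  have hmeasE : ∀ n, Measurable (fun e : E => K (dist x e / h n)) := fun n =>
    hKmeas.comp (((continuous_const.dist continuous_id).measurable).div_const _)
  set Y : ℕ → ℕ → Ω → ℝ := fun n i ω => K (dist x (Xs i ω) / h n) with hYdef
  have hYmeas : ∀ n i, Measurable (Y n i) := fun n i => (hmeasE n).comp (hXs i)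
  have hYmem : ∀ n i, MemLp (Y n i) 2 P := by
    intro n i
    refine MemLp.of_bound (hYmeas n i).aestronglyMeasurable C₂ ?_
    filter_upwards with ω
    rw [Real.norm_eq_abs, abs_of_nonneg (hKnonneg _)]
    exact hKle _
  have hYint : ∀ n i, Integrable (Y n i) P := fun n i => (hYmem n i).integrable one_le_two
  have hEY : ∀ n i, ∫ ω, Y n i ω ∂P = μ₁ n := by
    intro n i
    rw [hμ₁ n]
    exact ((hident i).comp (hmeasE n)).integral_eq
  -- variance bound for each Y
  have hVarY : ∀ n i, variance (Y n i) P ≤ C₂ * μ₁ n := by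
    intro n i
    have h1 : variance (Y n i) P ≤ ∫ ω, (Y n i ω) ^ 2 ∂P := by
      have := variance_le_expectation_sq (μ := P) (hYmeas n i).aestronglyMeasurable
      simpa using this
    have h2 : ∫ ω, (Y n i ω) ^ 2 ∂P ≤ ∫ ω, C₂ * Y n i ω ∂P := by
      refine integral_mono (hYmem n i).integrable_sq ((hYint n i).const_mul C₂) ?_
      intro ω
      have h0 := hKnonneg (dist x (Xs i ω) / h n)
      have hc := hKle (dist x (Xs i ω) / h n)
      simp only [hYdef]
      nlinarith
    rw [integral_const_mul, hEY] at h2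
    exact h1.trans h2
  -- lower bound on μ₁
  have hμ₁low : ∀ n, C₁ * φ n ≤ μ₁ n := by
    intro n
    rw [hμ₁ n, hφ n]
    set A := {ω | dist x (X ω) ≤ h n} with hA
    have hAmeas : MeasurableSet A :=
      measurableSet_le ((continuous_const.dist continuous_id).measurable.comp hX) measurable_const
    have hint1 : Integrable (A.indicator fun _ => C₁) P :=
      (integrable_const C₁).indicator hAmeas
    have hint2 : Integrable (fun ω => K (dist x (X ω) / h n)) P :=
      ((hident 0).comp (hmeasE n)).integrable_iff.mp (hYint n 0)
    have hle : ∀ ω, A.indicator (fun _ => C₁) ω ≤ K (dist x (X ω) / h n) := by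
      intro ω
      by_cases hω : ω ∈ A
      · rw [Set.indicator_of_mem hω]
        refine (hKbound _ ?_).1
        constructor
        · exact div_nonneg dist_nonneg (hhpos n).le
        · exact div_le_one_of_le₀ hω (hhpos n).le
      · rw [Set.indicator_of_notMem hω]
        exact hKnonneg _
    calc C₁ * (P A).toReal = ∫ ω, A.indicator (fun _ => C₁) ω ∂P := by
          rw [integral_indicator_const _ hAmeas]; rw [smul_eq_mul, Measure.real]; ring
      _ ≤ _ := integral_mono hint1 hint2 hle
  have hμ₁pos : ∀ n, 0 < μ₁ n := fun n =>
    lt_of_lt_of_le (mul_pos hC₁ (hφpos n)) (hμ₁low n)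
  -- main per-n bound
  have key : ∀ n : ℕ, 1 ≤ n →
      (P {ω | δ ≤ |g n ω - 1|}).toReal ≤ (C₂ / (C₁ * δ ^ 2)) * (1 / ((n : ℝ) * φ n)) := by
    intro n hn
    have hnpos : (0:ℝ) < n := by exact_mod_cast hn
    have hnμ : (0:ℝ) < (n : ℝ) * μ₁ n := mul_pos hnpos (hμ₁pos n)
    have hgfun : g n = fun ω => (1 / ((n : ℝ) * μ₁ n)) * (∑ i ∈ Finset.range n, Y n i) ω := by
      funext ω
      rw [hg n ω]
      simp [hYdef]
    have hSmem : MemLp (∑ i ∈ Finset.range n, Y n i) 2 P :=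
      memLp_finset_sum' _ fun i _ => hYmem n i
    have hgmem : MemLp (g n) 2 P := by
      rw [hgfun]
      exact hSmem.const_mul _
    -- expectation of g n is 1
    have hEg : ∫ ω, g n ω ∂P = 1 := by
      rw [hgfun]
      rw [integral_const_mul]
      have : ∫ ω, (∑ i ∈ Finset.range n, Y n i) ω ∂P = ∑ i ∈ Finset.range n, ∫ ω, Y n i ω ∂P := by
        simp only [Finset.sum_apply]
        exact integral_finset_sum _ fun i _ => hYint n i
      rw [this]
      simp only [hEY, Finset.sum_const, Finset.card_range, nsmul_eq_mul]
      field_simp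
      exact div_self (hμ₁pos n).ne'
    -- variance of g n
    have hVS : variance (∑ i ∈ Finset.range n, Y n i) P
        = ∑ i ∈ Finset.range n, variance (Y n i) P := by
      refine IndepFun.variance_sum (fun i _ => hYmem n i) ?_
      intro i _ j _ hij
      exact (hindep.indepFun hij).comp (hmeasE n) (hmeasE n)
    have hVg : variance (g n) P ≤ C₂ / ((n : ℝ) * C₁ * φ n) := by
      have h1 : variance (g n) P
          = (1 / ((n : ℝ) * μ₁ n)) ^ 2 * variance (∑ i ∈ Finset.range n, Y n i) P := by
        rw [hgfun]
        exact variance_const_mul _ _ _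
      rw [h1, hVS]
      have h2 : ∑ i ∈ Finset.range n, variance (Y n i) P ≤ (n : ℝ) * (C₂ * μ₁ n) := by
        calc ∑ i ∈ Finset.range n, variance (Y n i) P
            ≤ ∑ _i ∈ Finset.range n, (C₂ * μ₁ n) := Finset.sum_le_sum fun i _ => hVarY n i
          _ = (n : ℝ) * (C₂ * μ₁ n) := by simp [mul_comm]
      have h3 : (1 / ((n : ℝ) * μ₁ n)) ^ 2 * ((n : ℝ) * (C₂ * μ₁ n)) = C₂ / ((n : ℝ) * μ₁ n) := by
        field_simp
      calc (1 / ((n : ℝ) * μ₁ n)) ^ 2 * ∑ i ∈ Finset.range n, variance (Y n i) P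
          ≤ (1 / ((n : ℝ) * μ₁ n)) ^ 2 * ((n : ℝ) * (C₂ * μ₁ n)) := by
            exact mul_le_mul_of_nonneg_left h2 (by positivity)
        _ = C₂ / ((n : ℝ) * μ₁ n) := h3
        _ ≤ C₂ / ((n : ℝ) * C₁ * φ n) := by
            apply div_le_div_of_nonneg_left hC₂.le (mul_pos (mul_pos hnpos hC₁) (hφpos n))
            calc (n : ℝ) * C₁ * φ n = (n : ℝ) * (C₁ * φ n) := by ring
              _ ≤ (n : ℝ) * μ₁ n := by
                  exact mul_le_mul_of_nonneg_left (hμ₁low n) hnpos.le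
    -- Chebyshev
    have hcheb := meas_ge_le_variance_div_sq (μ := P) hgmem hδ
    rw [hEg] at hcheb
    have htr : (P {ω | δ ≤ |g n ω - 1|}).toReal ≤ variance (g n) P / δ ^ 2 := by
      refine ENNReal.toReal_le_of_le_ofReal ?_ hcheb
      have := variance_nonneg (g n) P
      positivity
    refine htr.trans ?_
    rw [div_le_iff₀ (by positivity : (0:ℝ) < δ ^ 2)]
    refine hVg.trans (le_of_eq ?_)
    have hδ' : δ ≠ 0 := hδ.ne'
    have hn0 : (n : ℝ) ≠ 0 := hnpos.ne'
    have hφ' : φ n ≠ 0 := (hφpos n).ne'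
    have hC₁' : C₁ ≠ 0 := hC₁.ne'
    field_simp
  -- squeeze
  have hbound : Tendsto (fun n : ℕ => (C₂ / (C₁ * δ ^ 2)) * (1 / ((n : ℝ) * φ n)))
      atTop (nhds 0) := by
    have h1 : Tendsto (fun n : ℕ => ((n : ℝ) * φ n)⁻¹) atTop (nhds 0) :=
      hnφ.inv_tendsto_atTop
    have := h1.const_mul (C₂ / (C₁ * δ ^ 2))
    simpa [one_div] using this
  refine squeeze_zero' ?_ ?_ hbound
  · filter_upwards with n using ENNReal.toReal_nonneg
  · filter_upwards [eventually_ge_atTop 1] with n hn using key n hn
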